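/- Let f be a non-constant polynomial in ℤ[X]. Suppose d ≥ 1 is an integer such that every non-unit divisor of f in ℤ[X] has degree at least d. Let ρ be a real number such that |α| ≤ ρ for every complex root α of f. If there exists m ∈ ℤ with |m| ≥ ρ + 1 and |f(m)| = s·P, where s is an integer with s < (|m| − ρ)^d and P is a prime number, then f is irreducible in ℤ[X]. -/

import Mathlib

open Polynomial

lemma lpfw_pow_card_le_prod (c : ℝ) (hc : 0 ≤ c) (s : Multiset ℝ)
    (h : ∀ x ∈ s, c ≤ x) : c ^ Multiset.card s ≤ s.prod := by
  induction s using Multiset.induction with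
  | empty => simp
  | cons x s ih =>
    have hx : c ≤ x := h x (Multiset.mem_cons_self x s)
    have hs' : ∀ y ∈ s, c ≤ y := fun y hy => h y (Multiset.mem_cons_of_mem hy)
    have ihs := ih hs'
    simp only [Multiset.card_cons, Multiset.prod_cons, pow_succ]
    calc c ^ Multiset.card s * c ≤ s.prod * x :=
        mul_le_mul ihs hx hc (le_trans (pow_nonneg hc _) ihs)
      _ = x * s.prod := mul_comm _ _

lemma lpfw_key (f : Polynomial ℤ) (hf0 : f ≠ 0) (ρ : ℝ)
    (hρ : ∀ α : ℂ, (f.map (Int.castRingHom ℂ)).IsRoot α → ‖α‖ ≤ ρ)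
    (m : ℤ) (hm : ρ + 1 ≤ |(m : ℝ)|)
    (a : Polynomial ℤ) (ha : a ∣ f) :
    (|(m : ℝ)| - ρ) ^ a.natDegree ≤ |((a.eval m : ℤ) : ℝ)| := by
  have hbase : (1 : ℝ) ≤ |(m : ℝ)| - ρ := by linarith
  have hbase0 : (0 : ℝ) ≤ |(m : ℝ)| - ρ := by linarith
  have ha0 : a ≠ 0 := by rintro rfl; exact hf0 (zero_dvd_iff.mp ha)
  set φ := Int.castRingHom ℂ with hφ
  have hinj : Function.Injective φ := Int.cast_injective
  set A := a.map φ with hA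
  set F := f.map φ with hF
  have hA0 : A ≠ 0 := (Polynomial.map_ne_zero_iff hinj).mpr ha0
  have hF0 : F ≠ 0 := (Polynomial.map_ne_zero_iff hinj).mpr hf0
  have hAF : A ∣ F := Polynomial.map_dvd φ ha
  have hsplit : A.Splits := IsAlgClosed.splits A
  have heq : A = C A.leadingCoeff * (A.roots.map fun r => X - C r).prod :=
    hsplit.eq_prod_roots
  have hcard : Multiset.card A.roots = a.natDegree := by
    rw [Polynomial.splits_iff_card_roots.mp hsplit]
    exact Polynomial.natDegree_map_eq_of_injective hinj a
  -- root bound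
  have hroot : ∀ r ∈ A.roots, |(m : ℝ)| - ρ ≤ ‖(m : ℂ) - r‖ := by
    intro r hr
    have hrF : r ∈ F.roots := Multiset.mem_of_le (Polynomial.roots.le_of_dvd hF0 hAF) hr
    have hrρ : ‖r‖ ≤ ρ := hρ r (Polynomial.isRoot_of_mem_roots hrF)
    have : ‖(m : ℂ)‖ - ‖r‖ ≤ ‖(m : ℂ) - r‖ := by
      simpa using norm_sub_norm_le (m : ℂ) r
    have habs : ‖(m : ℂ)‖ = |(m : ℝ)| := by
      simpa using Complex.norm_intCast m
    linarith
  -- evaluate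
  have heval : A.eval (m : ℂ) = ((a.eval m : ℤ) : ℂ) := by
    rw [hA, Polynomial.eval_intCast_map]; rfl
  have habsEval : ‖A.eval (m : ℂ)‖ = |((a.eval m : ℤ) : ℝ)| := by
    rw [heval]; simpa using Complex.norm_intCast (a.eval m)
  have hprodeq : ‖A.eval (m : ℂ)‖ =
      ‖A.leadingCoeff‖ * (A.roots.map fun r => ‖(m : ℂ) - r‖).prod := by
    conv_lhs => rw [heq]
    rw [Polynomial.eval_mul, Polynomial.eval_C, norm_mul]
    congr 1
    rw [Polynomial.eval_multiset_prod]
    rw [show ∀ x : ℂ, ‖x‖ = normHom x from fun _ => rfl, map_multiset_prod, Multiset.map_map, Multiset.map_map]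
    simp [Function.comp]
  have hlc : (1 : ℝ) ≤ ‖A.leadingCoeff‖ := by
    have : A.leadingCoeff = ((a.leadingCoeff : ℤ) : ℂ) := by
      rw [hA]; exact Polynomial.leadingCoeff_map_of_injective hinj a
    rw [this]
    have h1 : (1 : ℤ) ≤ |a.leadingCoeff| :=
      Int.one_le_abs (Polynomial.leadingCoeff_ne_zero.mpr ha0)
    have := Complex.norm_intCast a.leadingCoeff
    rw [this]
    rw [← Int.cast_abs]
    exact_mod_cast h1
  have hprodlb : (|(m : ℝ)| - ρ) ^ a.natDegree ≤
      (A.roots.map fun r => ‖(m : ℂ) - r‖).prod := by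
    have := lpfw_pow_card_le_prod (|(m : ℝ)| - ρ) hbase0
      (A.roots.map fun r => ‖(m : ℂ) - r‖) ?_
    · rwa [Multiset.card_map, hcard] at this
    · intro x hx
      obtain ⟨r, hr, rfl⟩ := Multiset.mem_map.mp hx
      exact hroot r hr
  calc (|(m : ℝ)| - ρ) ^ a.natDegree
      ≤ 1 * (A.roots.map fun r => ‖(m : ℂ) - r‖).prod := by
        rw [one_mul]; exact hprodlb
    _ ≤ ‖A.leadingCoeff‖ *
        (A.roots.map fun r => ‖(m : ℂ) - r‖).prod := by
        apply mul_le_mul_of_nonneg_right hlc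
        exact le_trans (pow_nonneg hbase0 _) hprodlb
    _ = |((a.eval m : ℤ) : ℝ)| := by rw [← hprodeq, habsEval]

lemma lpfw_half (d : ℕ) (ρ : ℝ) (m : ℤ) (hm : ρ + 1 ≤ |(m : ℝ)|)
    (s : ℤ) (P : ℕ) (hP : P.Prime)
    (hs : (s : ℝ) < (|(m : ℝ)| - ρ) ^ d)
    (x y : ℤ) (hx0 : x ≠ 0)
    (nb : ℕ) (hdb : d ≤ nb)
    (ky : (|(m : ℝ)| - ρ) ^ nb ≤ |((y : ℤ) : ℝ)|)
    (hprod : |x| * |y| = s * (P : ℤ))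
    (hdvd : (P : ℤ) ∣ |x|) : False := by
  have hbase : (1 : ℝ) ≤ |(m : ℝ)| - ρ := by linarith
  have hPpos : (0 : ℤ) < (P : ℤ) := by exact_mod_cast hP.pos
  have hPa : (P : ℤ) ≤ |x| := Int.le_of_dvd (abs_pos.mpr hx0) hdvd
  have hbs : |y| ≤ s := by
    nlinarith [abs_nonneg y, mul_le_mul_of_nonneg_right hPa (abs_nonneg y)]
  have hpowmono : (|(m : ℝ)| - ρ) ^ d ≤ (|(m : ℝ)| - ρ) ^ nb :=
    pow_le_pow_right₀ hbase hdb
  have hcast : |((y : ℤ) : ℝ)| ≤ (s : ℝ) := by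
    rw [← Int.cast_abs]; exact_mod_cast hbs
  linarith

/-- **Large prime factor witness (LPFW) irreducibility criterion.** Let `f : ℤ[X]` be
non-constant, `d ≥ 1` a lower bound for the degree of every non-unit divisor of `f`,
and `ρ` an upper bound on the absolute values of the complex roots of `f`.
If `m : ℤ` satisfies `|m| ≥ ρ + 1` and `|f(m)| = s * P` with `s` an integer satisfying
`s < (|m| - ρ) ^ d` and `P` prime, then `f` is irreducible. -/
theorem irreducible_of_large_prime_factor_witness
    (f : Polynomial ℤ) (hf : 0 < f.natDegree)
    (d : ℕ) (hd : 1 ≤ d)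
    (hdeg : ∀ a : Polynomial ℤ, a ∣ f → a ≠ 1 → a ≠ -1 → d ≤ a.natDegree)
    (ρ : ℝ) (hρ : ∀ α : ℂ, (f.map (Int.castRingHom ℂ)).IsRoot α → ‖α‖ ≤ ρ)
    (m : ℤ) (hm : ρ + 1 ≤ |(m : ℝ)|)
    (s : ℤ) (P : ℕ) (hP : P.Prime)
    (hfm : |f.eval m| = s * (P : ℤ))
    (hs : (s : ℝ) < (|(m : ℝ)| - ρ) ^ d) :
    Irreducible f := by
  have hf0 : f ≠ 0 := fun h => by simp [h] at hf
  have hbase : (1 : ℝ) ≤ |(m : ℝ)| - ρ := by linarith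
  have evalne : ∀ a : Polynomial ℤ, a ∣ f → a.eval m ≠ 0 := by
    intro a hadvd h
    have hk := lpfw_key f hf0 ρ hρ m hm a hadvd
    rw [h] at hk
    have := pow_pos (show (0:ℝ) < |(m : ℝ)| - ρ by linarith) a.natDegree
    simp at hk
    linarith
  rw [irreducible_iff]
  refine ⟨Polynomial.not_isUnit_of_natDegree_pos f hf, ?_⟩
  intro a b hab
  by_contra hcon
  push_neg at hcon
  obtain ⟨hua, hub⟩ := hcon
  have hadvd : a ∣ f := Dvd.intro b hab.symm
  have hbdvd : b ∣ f := ⟨a, by rw [hab, mul_comm]⟩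
  have hda : d ≤ a.natDegree :=
    hdeg a hadvd (fun h => hua (h ▸ isUnit_one)) (fun h => hua (h ▸ isUnit_one.neg))
  have hdb : d ≤ b.natDegree :=
    hdeg b hbdvd (fun h => hub (h ▸ isUnit_one)) (fun h => hub (h ▸ isUnit_one.neg))
  have ka := lpfw_key f hf0 ρ hρ m hm a hadvd
  have kb := lpfw_key f hf0 ρ hρ m hm b hbdvd
  have hprod : |a.eval m| * |b.eval m| = s * (P : ℤ) := by
    rw [← abs_mul, ← Polynomial.eval_mul, ← hab, hfm]
  have hPZ : Prime ((P : ℕ) : ℤ) := by rw [Int.prime_iff_natAbs_prime]; simpa using hP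
  have hdvd : ((P : ℕ) : ℤ) ∣ |a.eval m| * |b.eval m| := ⟨s, by rw [hprod, mul_comm]⟩
  rcases hPZ.dvd_mul.mp hdvd with h | h
  · exact lpfw_half d ρ m hm s P hP hs (a.eval m) (b.eval m)
      (evalne a hadvd) b.natDegree hdb kb hprod h
  · exact lpfw_half d ρ m hm s P hP hs (b.eval m) (a.eval m)
      (evalne b hbdvd) a.natDegree hda ka (by rw [mul_comm]; exact hprod) h
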